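/- Let ψ be a quantifier-free HyperLTL formula over AP ∪ {o} with free variables among π₁,…,π_k, and let N = depth(ψ)+1. There exists a quantifier-free formula ψ~ with the same free variables, which is a Boolean combination of formulas of the form a_π (a ∈ AP ∪ {o}) and F(o_π ∧ F o_{π'}), such that for every set of traces T = enc(w,f) (w a finite word over 2^AP, f a stretch function) and every trace assignment Π into T: (T^{(N)}, Π^{(N)}) ⊨ ψ if and only if (T, Π) ⊨ ψ~, where T^{(N)} = enc(w, n ↦ N·(n+1)) and Π^{(N)} is the assignment obtained from Π by moving, in each assigned trace, the unique o-position f(i) to N·(i+1) while keeping the AP-label of the first position. -/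

import Mathlib

/-! ### HyperLTL: syntax and semantics -/

/-- A trace over a set `AP` of atomic propositions. -/
abbrev Trace (AP : Type) : Type := ℕ → Set AP

/-- The suffix of a trace from position `j` onwards. -/
def Trace.shift {AP : Type} (t : Trace AP) (j : ℕ) : Trace AP := fun i => t (i + j)

/-- Quantifier-free HyperLTL formulas; trace variables are natural numbers. -/
inductive QF (AP : Type) : Type where
  | atom : AP → ℕ → QF AP
  | neg  : QF AP → QF AP
  | disj : QF AP → QF AP → QF AP
  | next : QF AP → QF AP
  | untl : QF AP → QF AP → QF AP

/-- HyperLTL formulas: a block of trace quantifiers followed by a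
quantifier-free formula (HyperLTL formulas are in prenex normal form). -/
inductive HFormula (AP : Type) : Type where
  | ex  : ℕ → HFormula AP → HFormula AP
  | all : ℕ → HFormula AP → HFormula AP
  | qf  : QF AP → HFormula AP

/-- The simultaneous shift of a trace assignment. -/
def shiftAsg {AP : Type} (As : ℕ → Trace AP) (j : ℕ) : ℕ → Trace AP :=
  fun x => Trace.shift (As x) j

/-- Semantics of quantifier-free HyperLTL formulas w.r.t. a trace assignment. -/
def QF.sat {AP : Type} : QF AP → (ℕ → Trace AP) → Prop
  | .atom a x, As => a ∈ As x 0
  | .neg ψ, As => ¬ ψ.sat As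
  | .disj ψ₁ ψ₂, As => ψ₁.sat As ∨ ψ₂.sat As
  | .next ψ, As => ψ.sat (shiftAsg As 1)
  | .untl ψ₁ ψ₂, As => ∃ j, ψ₂.sat (shiftAsg As j) ∧ ∀ j' < j, ψ₁.sat (shiftAsg As j')

/-- Semantics of HyperLTL formulas w.r.t. a set of traces and a trace assignment. -/
def HFormula.sat {AP : Type} : HFormula AP → Set (Trace AP) → (ℕ → Trace AP) → Prop
  | .ex x φ, T, As => ∃ t ∈ T, φ.sat T (Function.update As x t)
  | .all x φ, T, As => ∀ t ∈ T, φ.sat T (Function.update As x t)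
  | .qf ψ, _, As => ψ.sat As

def QF.freeVars {AP : Type} : QF AP → Set ℕ
  | .atom _ x => {x}
  | .neg ψ => ψ.freeVars
  | .disj ψ₁ ψ₂ => ψ₁.freeVars ∪ ψ₂.freeVars
  | .next ψ => ψ.freeVars
  | .untl ψ₁ ψ₂ => ψ₁.freeVars ∪ ψ₂.freeVars

def HFormula.freeVars {AP : Type} : HFormula AP → Set ℕ
  | .ex x φ => φ.freeVars \ {x}
  | .all x φ => φ.freeVars \ {x}
  | .qf ψ => ψ.freeVars

/-- A sentence is a formula without free variables. -/
def HFormula.IsSentence {AP : Type} (φ : HFormula AP) : Prop := φ.freeVars = ∅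

/-- `T` is a model of `φ` (for sentences the initial assignment is irrelevant). -/
def HModels {AP : Type} (T : Set (Trace AP)) (φ : HFormula AP) : Prop :=
  φ.sat T (fun _ _ => ∅)

/-- A HyperLTL sentence is satisfiable if it has a model. -/
def HSatisfiable {AP : Type} (φ : HFormula AP) : Prop := ∃ T, HModels T φ

/-! ### Finite words, stretch functions, and encodings of words as trace sets -/

/-- A finite word over `2^AP`: only letters at positions `< len` are relevant. -/
structure FinWord (AP : Type) : Type where
  len : ℕ
  letter : ℕ → Set AP

/-- A stretch function is strictly monotone with positive first value. -/
def IsStretch (f : ℕ → ℕ) : Prop := StrictMono f ∧ 0 < f 0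

/-- The trace encoding position `n` of the word `w`, w.r.t. the stretch function `f`.
The fresh proposition `o` is represented by `none`. -/
def encTrace {AP : Type} (w : FinWord AP) (f : ℕ → ℕ) (n : ℕ) : Trace (Option AP) :=
  fun i => {x | (∃ a : AP, x = some a ∧ i = 0 ∧ a ∈ w.letter n) ∨ (x = none ∧ i = f n)}

/-- The encoding `enc(w, f)` of a finite word `w` as a set of traces. -/
def encSet {AP : Type} (w : FinWord AP) (f : ℕ → ℕ) : Set (Trace (Option AP)) :=
  {t | ∃ n, n < w.len ∧ t = encTrace w f n}

/-- The derived eventually operator `F ψ` (as `(ψ ∨ ¬ψ) U ψ`). -/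
def QF.ev {AP : Type} (ψ : QF AP) : QF AP := .untl (.disj ψ (.neg ψ)) ψ

/-- Conjunction, derived from negation and disjunction. -/
def QF.conj {AP : Type} (ψ₁ ψ₂ : QF AP) : QF AP := .neg (.disj (.neg ψ₁) (.neg ψ₂))

/-- The formula `F(o_x ∧ F o_y)`. -/
def leHat {AP : Type} (x y : ℕ) : QF (Option AP) :=
  QF.ev (QF.conj (.atom none x) (QF.ev (.atom none y)))

/-- Boolean combinations of formulas of the form `a_π` and `F(o_π ∧ F o_π')`. -/
inductive SimpleQF {AP : Type} : QF (Option AP) → Prop where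
  | atom (a : Option AP) (x : ℕ) : SimpleQF (.atom a x)
  | le (x y : ℕ) : SimpleQF (leHat x y)
  | neg {ψ} : SimpleQF ψ → SimpleQF (.neg ψ)
  | disj {ψ₁ ψ₂} : SimpleQF ψ₁ → SimpleQF ψ₂ → SimpleQF (.disj ψ₁ ψ₂)

/-- The temporal depth of a quantifier-free HyperLTL formula. -/
def QF.depth {AP : Type} : QF AP → ℕ
  | .atom _ _ => 0
  | .neg ψ => ψ.depth
  | .disj ψ₁ ψ₂ => max ψ₁.depth ψ₂.depth
  | .next ψ => 1 + ψ.depth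
  | .untl ψ₁ ψ₂ => 1 + max ψ₁.depth ψ₂.depth

namespace QFFlatten

/-! ### Basic lemmas about shifts and satisfaction -/

lemma shiftAsg_shiftAsg {AP : Type} (As : ℕ → Trace AP) (i j : ℕ) :
    shiftAsg (shiftAsg As j) i = shiftAsg As (i + j) := by
  funext x t
  simp [shiftAsg, Trace.shift, Nat.add_assoc]

lemma shiftAsg_zero {AP : Type} (As : ℕ → Trace AP) : shiftAsg As 0 = As := by
  funext x t
  simp [shiftAsg, Trace.shift]

lemma freeVars_nonempty {AP : Type} (ψ : QF AP) : ψ.freeVars.Nonempty := by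
  induction ψ with
  | atom a x => exact ⟨x, rfl⟩
  | neg ψ ih => exact ih
  | disj ψ₁ ψ₂ ih₁ ih₂ => obtain ⟨x, hx⟩ := ih₁; exact ⟨x, Set.mem_union_left _ hx⟩
  | next ψ ih => exact ih
  | untl ψ₁ ψ₂ ih₁ ih₂ => obtain ⟨x, hx⟩ := ih₁; exact ⟨x, Set.mem_union_left _ hx⟩

lemma sat_congr {AP : Type} (ψ : QF AP) : ∀ As₁ As₂ : ℕ → Trace AP,
    (∀ x ∈ ψ.freeVars, As₁ x = As₂ x) → (ψ.sat As₁ ↔ ψ.sat As₂) := by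
  induction ψ with
  | atom a x =>
      intro As₁ As₂ h
      have hx : As₁ x = As₂ x := h x rfl
      simp [QF.sat, hx]
  | neg ψ ih =>
      intro As₁ As₂ h
      simp only [QF.sat]
      rw [ih As₁ As₂ h]
  | disj ψ₁ ψ₂ ih₁ ih₂ =>
      intro As₁ As₂ h
      simp only [QF.sat]
      rw [ih₁ As₁ As₂ (fun x hx => h x (Set.mem_union_left _ hx)),
        ih₂ As₁ As₂ (fun x hx => h x (Set.mem_union_right _ hx))]
  | next ψ ih =>
      intro As₁ As₂ h
      simp only [QF.sat]
      exact ih _ _ (fun x hx => by simp only [shiftAsg, h x hx])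
  | untl ψ₁ ψ₂ ih₁ ih₂ =>
      intro As₁ As₂ h
      simp only [QF.sat]
      apply exists_congr; intro j
      apply and_congr
      · exact ih₂ _ _ (fun x hx => by
          simp only [shiftAsg, h x (Set.mem_union_right _ hx)])
      · apply forall_congr'; intro j'
        apply imp_congr_right; intro _
        exact ih₁ _ _ (fun x hx => by
          simp only [shiftAsg, h x (Set.mem_union_left _ hx)])

/-! ### The position-matching relation -/

/-- Two positions `Q` (on the timeline of the events `u₁`) and `Q'` (on the
timeline of the events `u₂`) are matched at granularity `d`: both are initial
or not, the sets of past events agree, and the events in the forward windows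
of length `d` agree exactly. -/
def Rrel (u₁ u₂ : ℕ → ℕ) (d Q Q' : ℕ) : Prop :=
  (Q = 0 ↔ Q' = 0) ∧
    ∀ x, (u₁ x < Q ↔ u₂ x < Q') ∧ ∀ c, c ≤ d → (u₁ x = Q + c ↔ u₂ x = Q' + c)

lemma Rrel.symm {u₁ u₂ : ℕ → ℕ} {d Q Q' : ℕ} (h : Rrel u₁ u₂ d Q Q') :
    Rrel u₂ u₁ d Q' Q :=
  ⟨h.1.symm, fun x => ⟨(h.2 x).1.symm, fun c hc => ((h.2 x).2 c hc).symm⟩⟩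

lemma Rrel.mono {u₁ u₂ : ℕ → ℕ} {d e Q Q' : ℕ} (h : Rrel u₁ u₂ d Q Q') (he : e ≤ d) :
    Rrel u₁ u₂ e Q Q' :=
  ⟨h.1, fun x => ⟨(h.2 x).1, fun c hc => (h.2 x).2 c (le_trans hc he)⟩⟩

lemma Rrel.succ {u₁ u₂ : ℕ → ℕ} {d Q Q' : ℕ} (h : Rrel u₁ u₂ (d + 1) Q Q') :
    Rrel u₁ u₂ d (Q + 1) (Q' + 1) := by
  refine ⟨by omega, fun x => ⟨?_, fun c hc => ?_⟩⟩
  · have h1 := (h.2 x).1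
    have h2 := (h.2 x).2 0 (by omega)
    omega
  · have h2 := (h.2 x).2 (c + 1) (by omega)
    omega

lemma Rrel.far {u₁ u₂ : ℕ → ℕ} {d Q Q' : ℕ} (h : Rrel u₁ u₂ d Q Q') (x : ℕ)
    (hx : Q + d < u₁ x) : Q' + d < u₂ x := by
  have h1 := (h.2 x).1
  by_contra hcon
  push_neg at hcon
  have hge : Q' ≤ u₂ x := by
    by_contra h2
    push_neg at h2
    have := h1.mpr h2
    omega
  have h2 := (h.2 x).2 (u₂ x - Q') (by omega)
  have h3 : u₁ x = Q + (u₂ x - Q') := h2.mpr (by omega)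
  omega

/-- The key back-and-forth step for the `until` case: given matched positions
`j, j'` at granularity `e+1` and a target `P ≥ j`, there is a matched (at
granularity `e`) target `P' ≥ j'` such that moreover every position in
`[j', P')` is matched with some position in `[j, P)`. -/
lemma until_step (N : ℕ) (u₁ u₂ : ℕ → ℕ)
    (hiso : ∀ x y, u₁ x ≤ u₁ y ↔ u₂ x ≤ u₂ y)
    (hb₁ : ∀ x, N ≤ u₁ x) (hb₂ : ∀ x, N ≤ u₂ x)
    (hg₁ : ∀ x y, u₁ x < u₁ y → u₁ x + N ≤ u₁ y)
    (hg₂ : ∀ x y, u₂ x < u₂ y → u₂ x + N ≤ u₂ y)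
    (e : ℕ) (heN : e + 2 ≤ N)
    (j j' P : ℕ) (hR : Rrel u₁ u₂ (e + 1) j j') (hP : j ≤ P) :
    ∃ P', j' ≤ P' ∧ Rrel u₁ u₂ e P P' ∧
      ∀ Q'', j' ≤ Q'' → Q'' < P' → ∃ Q₀, j ≤ Q₀ ∧ Q₀ < P ∧ Rrel u₁ u₂ e Q₀ Q'' := by
  have hlt : ∀ x y, u₁ x < u₁ y ↔ u₂ x < u₂ y := by
    intro x y
    rw [← not_le, ← not_le, hiso y x]
  have heq : ∀ x y, u₁ x = u₁ y ↔ u₂ x = u₂ y := by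
    intro x y
    constructor
    · intro h; exact le_antisymm ((hiso x y).mp h.le) ((hiso y x).mp h.ge)
    · intro h; exact le_antisymm ((hiso x y).mpr h.le) ((hiso y x).mpr h.ge)
  -- Step 1: there exists SOME matched position `p ≥ j'`.
  have hex : ∃ p, j' ≤ p ∧ Rrel u₁ u₂ e P p := by
    rcases Nat.eq_or_lt_of_le hP with hPj | hPj
    · exact ⟨j', le_rfl, hPj ▸ hR.mono (by omega)⟩
    · by_cases hNext : ∃ x, P ≤ u₁ x
      · -- there is an event ahead of (or at) `P`
        have hS₁ : {a : ℕ | P ≤ a ∧ ∃ x, u₁ x = a}.Nonempty := by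
          obtain ⟨x, hx⟩ := hNext
          exact ⟨u₁ x, hx, x, rfl⟩
        set m₁ := sInf {a : ℕ | P ≤ a ∧ ∃ x, u₁ x = a} with hm₁def
        obtain ⟨hm₁P, x₀, hx₀⟩ := Nat.sInf_mem hS₁
        have hminS : ∀ z, u₁ z < m₁ → u₁ z < P := by
          intro z hz
          by_contra hcon
          push_neg at hcon
          have : m₁ ≤ u₁ z := Nat.sInf_le ⟨hcon, z, rfl⟩
          omega
        set m₂ := u₂ x₀ with hm₂def
        by_cases hexact : m₁ ≤ P + e
        · -- `P` is at distance `≤ e` before the next event: exact match needed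
          have hm₂big : j' + (m₁ - P) < m₂ := by
            rcases le_or_gt (m₁ - j) (e + 1) with hc | hc
            · have h2 := ((hR.2 x₀).2 (m₁ - j) hc).mp (by omega)
              omega
            · have h2 := hR.far x₀ (by omega)
              omega
          refine ⟨m₂ - (m₁ - P), by omega, ⟨by omega, fun x => ⟨?_, fun c hc => ?_⟩⟩⟩
          · constructor
            · intro hx
              have hxm : u₁ x < u₁ x₀ := by omega
              have := hg₂ x x₀ ((hlt x x₀).mp hxm)
              omega
            · intro hx
              have hxm : u₂ x < u₂ x₀ := by omega
              have h5 := (hlt x x₀).mpr hxm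
              have := hminS x (by omega)
              omega
          · constructor
            · intro hx
              have h1 : ¬ u₁ x < m₁ := fun hcon => by have := hminS x hcon; omega
              have h2 : u₁ x = m₁ := by
                by_contra hne
                have : m₁ < u₁ x := by omega
                have := hg₁ x₀ x (by omega)
                omega
              have h3 : u₂ x = u₂ x₀ := (heq x x₀).mp (by omega)
              omega
            · intro hx
              have h1 : ¬ u₂ x < m₂ := by
                intro hcon
                have := hg₂ x x₀ hcon
                omega
              have h2 : u₂ x = m₂ := by
                by_contra hne
                have := hg₂ x₀ x (by omega)
                omega
              have h3 : u₁ x = u₁ x₀ := (heq x x₀).mpr (by omega)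
              omega
        · -- `P` is far (distance `> e`) from the next event
          have hm₂far : j' + (e + 1) < m₂ := hR.far x₀ (by omega)
          by_cases hPrev : ∃ z, u₂ z < m₂
          · have hS₂ne : {a : ℕ | (∃ z, u₂ z = a) ∧ a < m₂}.Nonempty := by
              obtain ⟨z, hz⟩ := hPrev
              exact ⟨u₂ z, ⟨z, rfl⟩, hz⟩
            have hS₂bdd : BddAbove {a : ℕ | (∃ z, u₂ z = a) ∧ a < m₂} :=
              ⟨m₂, fun a ha => ha.2.le⟩
            set pv := sSup {a : ℕ | (∃ z, u₂ z = a) ∧ a < m₂} with hpvdef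
            obtain ⟨⟨z₀, hz₀⟩, hpvlt⟩ := Nat.sSup_mem hS₂ne hS₂bdd
            have hub : ∀ z, u₂ z < m₂ → u₂ z ≤ pv := fun z hz =>
              le_csSup hS₂bdd ⟨⟨z, rfl⟩, hz⟩
            have hpvN : pv + N ≤ m₂ := by
              have := hg₂ z₀ x₀ (by omega)
              omega
            refine ⟨max j' (pv + 1), by omega, ⟨by omega, fun x => ⟨?_, fun c hc => ?_⟩⟩⟩
            · constructor
              · intro hx
                have h1 : u₁ x < u₁ x₀ := by
                  have := hminS x
                  omega
                have h2 := (hlt x x₀).mp h1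
                have := hub x (by omega)
                omega
              · intro hx
                have h1 : u₂ x < u₂ x₀ := by omega
                have h5 := (hlt x x₀).mpr h1
                have := hminS x (by omega)
                omega
            · constructor
              · intro hx
                exfalso
                have h1 : ¬ u₁ x < m₁ := fun hcon => by have := hminS x hcon; omega
                omega
              · intro hx
                exfalso
                have h1 : u₂ x < m₂ := by omega
                have := hub x h1
                omega
          · push_neg at hPrev
            have hPrev₁ : ∀ z, m₁ ≤ u₁ z := by
              intro z
              by_contra hcon
              push_neg at hcon
              have := (hlt z x₀).mp (by omega)
              have := hPrev z
              omega
            refine ⟨max j' 1, by omega, ⟨by omega, fun x => ⟨?_, fun c hc => ?_⟩⟩⟩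
            · have h1 := hPrev₁ x
              have h2 := hPrev x
              have h3 := hb₂ x₀
              omega
            · have h1 := hPrev₁ x
              have h2 := hPrev x
              have h3 := hb₂ x₀
              constructor
              · intro hx; exfalso; omega
              · intro hx; exfalso; omega
      · -- no event ahead of `P` at all
        push_neg at hNext
        have hS₃ne : (Set.range u₁).Nonempty := ⟨u₁ 0, 0, rfl⟩
        have hS₃bdd : BddAbove (Set.range u₁) := ⟨P, fun a ⟨z, hz⟩ => by
          have := hNext z; omega⟩
        set M₁ := sSup (Set.range u₁) with hM₁def
        obtain ⟨t₀, ht₀⟩ := Nat.sSup_mem hS₃ne hS₃bdd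
        have hub₁ : ∀ z, u₁ z ≤ M₁ := fun z => le_csSup hS₃bdd ⟨z, rfl⟩
        have hub₂ : ∀ z, u₂ z ≤ u₂ t₀ := fun z => (hiso z t₀).mp (by rw [ht₀]; exact hub₁ z)
        refine ⟨max j' (u₂ t₀ + 1), by omega, ⟨by omega, fun x => ⟨?_, fun c hc => ?_⟩⟩⟩
        · have h1 := hNext x
          have h2 := hub₂ x
          omega
        · have h1 := hNext x
          have h2 := hub₂ x
          constructor
          · intro hx; exfalso; omega
          · intro hx; exfalso; omega
  -- Step 2: take the LEAST matched position, and prove the backward property.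
  have hTne : {p : ℕ | j' ≤ p ∧ Rrel u₁ u₂ e P p}.Nonempty := hex
  obtain ⟨hj'P', hRP'⟩ := Nat.sInf_mem hTne
  set P' := sInf {p : ℕ | j' ≤ p ∧ Rrel u₁ u₂ e P p} with hP'def
  refine ⟨P', hj'P', hRP', ?_⟩
  intro Q'' hQ''j' hQ''P'
  have hjP : j < P := by
    rcases Nat.eq_or_lt_of_le hP with h | h
    · exfalso
      have : P' ≤ j' := Nat.sInf_le ⟨le_rfl, h ▸ hR.mono (by omega)⟩
      omega
    · exact h
  rcases Nat.eq_or_lt_of_le hQ''j' with hQe | hQlt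
  · exact ⟨j, le_rfl, hjP, hQe ▸ hR.mono (by omega)⟩
  · by_cases hα : ∃ y, Q'' ≤ u₂ y ∧ u₂ y ≤ Q'' + e
    · -- an event within the forward window of `Q''`
      obtain ⟨y, hy₁, hy₂⟩ := hα
      have hyj1 : ¬ u₁ y < j := fun hcon => by
        have := ((hR.2 y).1).mp hcon
        omega
      have hby := hb₁ y
      have hQ₀j : j + 1 ≤ u₁ y - (u₂ y - Q'') := by
        rcases le_or_gt (u₂ y - j') (e + 1) with hgc | hgc
        · have h2 := ((hR.2 y).2 (u₂ y - j') hgc).mpr (by omega)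
          omega
        · have h2 := hR.symm.far y (by omega)
          omega
      have hQ₀P : u₁ y - (u₂ y - Q'') < P := by
        rcases lt_or_ge (u₂ y) P' with hyP' | hyP'
        · have : u₁ y < P := ((hRP'.2 y).1).mpr hyP'
          omega
        · have h2 := ((hRP'.2 y).2 (u₂ y - P') (by omega)).mpr (by omega)
          omega
      refine ⟨u₁ y - (u₂ y - Q''), by omega, hQ₀P, ⟨by omega, fun x => ⟨?_, fun c hc => ?_⟩⟩⟩
      · constructor
        · intro hx
          have h1 : u₁ x < u₁ y := by omega
          have := hg₂ x y ((hlt x y).mp h1)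
          omega
        · intro hx
          have h1 : u₂ x < u₂ y := by omega
          have := hg₁ x y ((hlt x y).mpr h1)
          omega
      · constructor
        · intro hx
          have h1 : u₁ x = u₁ y := by
            by_contra hne
            rcases Nat.lt_or_ge (u₁ x) (u₁ y) with hl | hl
            · have := hg₁ x y hl
              omega
            · have := hg₁ y x (by omega)
              omega
          have h2 := (heq x y).mp h1
          omega
        · intro hx
          have h1 : u₂ x = u₂ y := by
            by_contra hne
            rcases Nat.lt_or_ge (u₂ x) (u₂ y) with hl | hl
            · have := hg₂ x y hl
              omega
            · have := hg₂ y x (by omega)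
              omega
          have h2 := (heq x y).mpr h1
          have hby2 := hb₂ y
          omega
    · by_cases hβ : ∃ z, Q'' ≤ u₂ z
      · -- the next event is beyond the window of `Q''`
        have hS₄ne : {a : ℕ | Q'' ≤ a ∧ ∃ z, u₂ z = a}.Nonempty := by
          obtain ⟨z, hz⟩ := hβ
          exact ⟨u₂ z, hz, z, rfl⟩
        set m₂'' := sInf {a : ℕ | Q'' ≤ a ∧ ∃ z, u₂ z = a} with hm₂''def
        obtain ⟨hm₂''Q, y'', hy''⟩ := Nat.sInf_mem hS₄ne
        have hmin₂ : ∀ z, u₂ z < m₂'' → u₂ z < Q'' := by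
          intro z hz
          by_contra hcon
          push_neg at hcon
          have : m₂'' ≤ u₂ z := Nat.sInf_le ⟨hcon, z, rfl⟩
          omega
        have hm₂''big : Q'' + e < m₂'' := by
          rcases Nat.lt_or_ge m₂'' (Q'' + e + 1) with h | h
          · exfalso
            exact hα ⟨y'', by omega⟩
          · omega
        have hm₁''big : j + (e + 1) < u₁ y'' := hR.symm.far y'' (by omega)
        by_cases hord : u₁ y'' ≤ P + e
        · -- match `Q''` with the position at distance `e+1` before the event
          refine ⟨u₁ y'' - (e + 1), by omega, by omega, ⟨by omega, fun x => ⟨?_, fun c hc => ?_⟩⟩⟩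
          · constructor
            · intro hx
              have h1 : u₁ x < u₁ y'' := by omega
              have h2 := (hlt x y'').mp h1
              exact hmin₂ x (by omega)
            · intro hx
              have h1 : u₂ x < u₂ y'' := by omega
              have := hg₁ x y'' ((hlt x y'').mpr h1)
              omega
          · constructor
            · intro hx
              exfalso
              have h1 : u₁ x < u₁ y'' := by omega
              have := hg₁ x y'' h1
              omega
            · intro hx
              exfalso
              have : m₂'' ≤ u₂ x := Nat.sInf_le ⟨by omega, x, rfl⟩
              omega
        · -- impossible: `Q''` would be an earlier matched position than `P'`
          exfalso
          push_neg at hord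
          have hRPQ : Rrel u₁ u₂ e P Q'' := by
            refine ⟨by omega, fun x => ⟨?_, fun c hc => ?_⟩⟩
            · constructor
              · intro hx
                have hx2 : u₂ x < P' := ((hRP'.2 x).1).mp hx
                by_contra hcon
                push_neg at hcon
                have h1 : m₂'' ≤ u₂ x := Nat.sInf_le ⟨hcon, x, rfl⟩
                have h2 : u₁ y'' ≤ u₁ x := (hiso y'' x).mpr (by omega)
                omega
              · intro hx
                exact ((hRP'.2 x).1).mpr (by omega)
            · constructor
              · intro hx
                exfalso
                rcases Nat.lt_or_ge (u₂ x) Q'' with hl | hl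
                · have : u₁ x < P := ((hRP'.2 x).1).mpr (by omega)
                  omega
                · have h1 : m₂'' ≤ u₂ x := Nat.sInf_le ⟨hl, x, rfl⟩
                  have h2 : u₁ y'' ≤ u₁ x := (hiso y'' x).mpr (by omega)
                  omega
              · intro hx
                exfalso
                have : m₂'' ≤ u₂ x := Nat.sInf_le ⟨by omega, x, rfl⟩
                omega
          have : P' ≤ Q'' := Nat.sInf_le ⟨hQ''j', hRPQ⟩
          omega
      · -- no event at all beyond `Q''`: again `Q''` would beat `P'`
        exfalso
        push_neg at hβ
        have hRPQ : Rrel u₁ u₂ e P Q'' := by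
          refine ⟨by omega, fun x => ⟨?_, fun c hc => ?_⟩⟩
          · constructor
            · intro _
              exact hβ x
            · intro hx
              exact ((hRP'.2 x).1).mpr (by omega)
          · constructor
            · intro hx
              exfalso
              have h2 : u₁ x < P := ((hRP'.2 x).1).mpr (by have := hβ x; omega)
              omega
            · intro hx
              exfalso
              have := hβ x
              omega
        have : P' ≤ Q'' := Nat.sInf_le ⟨hQ''j', hRPQ⟩
        omega

end QFFlatten

namespace QFFlatten

/-! ### Transfer of satisfaction along matched positions -/

lemma transfer {AP : Type} (N : ℕ) (u₁ u₂ : ℕ → ℕ) (As₁ As₂ : ℕ → Trace AP)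
    (hiso : ∀ x y, u₁ x ≤ u₁ y ↔ u₂ x ≤ u₂ y)
    (hb₁ : ∀ x, N ≤ u₁ x) (hb₂ : ∀ x, N ≤ u₂ x)
    (hg₁ : ∀ x y, u₁ x < u₁ y → u₁ x + N ≤ u₁ y)
    (hg₂ : ∀ x y, u₂ x < u₂ y → u₂ x + N ≤ u₂ y)
    (hatom : ∀ (a : AP) (x j j' : ℕ), Rrel u₁ u₂ 0 j j' →
      (a ∈ As₁ x j ↔ a ∈ As₂ x j')) :
    ∀ (φ : QF AP) (d : ℕ), φ.depth ≤ d → d < N → ∀ j j', Rrel u₁ u₂ d j j' →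
      (φ.sat (shiftAsg As₁ j) ↔ φ.sat (shiftAsg As₂ j')) := by
  intro φ
  induction φ with
  | atom a x =>
      intro d hd hdN j j' hRjj'
      simp only [QF.sat, shiftAsg, Trace.shift, Nat.zero_add]
      exact hatom a x j j' (hRjj'.mono (Nat.zero_le d))
  | neg φ ih =>
      intro d hd hdN j j' h
      simp only [QF.sat]
      rw [ih d hd hdN j j' h]
  | disj φ₁ φ₂ ih₁ ih₂ =>
      intro d hd hdN j j' h
      simp only [QF.depth, max_le_iff] at hd
      simp only [QF.sat]
      rw [ih₁ d hd.1 hdN j j' h, ih₂ d hd.2 hdN j j' h]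
  | next φ ih =>
      intro d hd hdN j j' h
      simp only [QF.depth] at hd
      obtain ⟨e, rfl⟩ : ∃ e, d = e + 1 := ⟨d - 1, by omega⟩
      simp only [QF.sat]
      rw [shiftAsg_shiftAsg, shiftAsg_shiftAsg,
        show (1 : ℕ) + j = j + 1 by omega, show (1 : ℕ) + j' = j' + 1 by omega]
      exact ih e (by omega) (by omega) (j + 1) (j' + 1) h.succ
  | untl φ₁ φ₂ ih₁ ih₂ =>
      intro d hd hdN j j' h
      simp only [QF.depth] at hd
      obtain ⟨e, rfl⟩ : ∃ e, d = e + 1 := ⟨d - 1, by omega⟩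
      have hd₁ : φ₁.depth ≤ e := by omega
      have hd₂ : φ₂.depth ≤ e := by omega
      simp only [QF.sat]
      constructor
      · rintro ⟨i, h₂, h₁⟩
        rw [shiftAsg_shiftAsg] at h₂
        obtain ⟨P', hj'P', hRP', hback⟩ :=
          until_step N u₁ u₂ hiso hb₁ hb₂ hg₁ hg₂ e (by omega) j j' (i + j) h (by omega)
        refine ⟨P' - j', ?_, ?_⟩
        · rw [shiftAsg_shiftAsg, show P' - j' + j' = P' by omega]
          exact (ih₂ e hd₂ (by omega) (i + j) P' hRP').mp h₂
        · intro i'' hi''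
          rw [shiftAsg_shiftAsg]
          obtain ⟨Q₀, hjQ₀, hQ₀P, hRQ⟩ := hback (i'' + j') (by omega) (by omega)
          have h₁' := h₁ (Q₀ - j) (by omega)
          rw [shiftAsg_shiftAsg, show Q₀ - j + j = Q₀ by omega] at h₁'
          exact (ih₁ e hd₁ (by omega) Q₀ (i'' + j') hRQ).mp h₁'
      · rintro ⟨i, h₂, h₁⟩
        rw [shiftAsg_shiftAsg] at h₂
        obtain ⟨P', hjP', hRP', hback⟩ :=
          until_step N u₂ u₁ (fun x y => (hiso x y).symm) hb₂ hb₁ hg₂ hg₁ e (by omega)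
            j' j (i + j') h.symm (by omega)
        refine ⟨P' - j, ?_, ?_⟩
        · rw [shiftAsg_shiftAsg, show P' - j + j = P' by omega]
          exact (ih₂ e hd₂ (by omega) P' (i + j') hRP'.symm).mpr h₂
        · intro i'' hi''
          rw [shiftAsg_shiftAsg]
          obtain ⟨Q₀, hjQ₀, hQ₀P, hRQ⟩ := hback (i'' + j) (by omega) (by omega)
          have h₁' := h₁ (Q₀ - j') (by omega)
          rw [shiftAsg_shiftAsg, show Q₀ - j' + j' = Q₀ by omega] at h₁'
          exact (ih₁ e hd₁ (by omega) (i'' + j) Q₀ hRQ.symm).mpr h₁'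

/-! ### Membership in encoded traces -/

lemma mem_encTrace_some {AP : Type} (w : FinWord AP) (f : ℕ → ℕ) (m i : ℕ) (a : AP) :
    some a ∈ encTrace w f m i ↔ (i = 0 ∧ a ∈ w.letter m) := by
  simp [encTrace]

lemma mem_encTrace_none {AP : Type} (w : FinWord AP) (f : ℕ → ℕ) (m i : ℕ) :
    (none : Option AP) ∈ encTrace w f m i ↔ i = f m := by
  simp [encTrace]

/-- The core lemma: satisfaction of `ψ` over the normalized stretch
`i ↦ N * (i + 1)` only depends on the letters and the relative order of the
positions assigned to the variables. -/
lemma core {AP : Type} (w₁ w₂ : FinWord AP) (n₁ n₂ : ℕ → ℕ) (N : ℕ)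
    (hlet : ∀ x, w₁.letter (n₁ x) = w₂.letter (n₂ x))
    (hord : ∀ x y, n₁ x ≤ n₁ y ↔ n₂ x ≤ n₂ y)
    (ψ : QF (Option AP)) (hN : ψ.depth < N) :
    (ψ.sat (fun x => encTrace w₁ (fun i => N * (i + 1)) (n₁ x)) ↔
      ψ.sat (fun x => encTrace w₂ (fun i => N * (i + 1)) (n₂ x))) := by
  have hN0 : 0 < N := by omega
  set u₁ : ℕ → ℕ := fun x => N * (n₁ x + 1) with hu₁
  set u₂ : ℕ → ℕ := fun x => N * (n₂ x + 1) with hu₂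
  have hmul_le : ∀ a b : ℕ, N * (a + 1) ≤ N * (b + 1) ↔ a ≤ b := by
    intro a b
    constructor
    · intro h
      have := Nat.le_of_mul_le_mul_left h hN0
      omega
    · intro h
      exact Nat.mul_le_mul le_rfl (by omega)
  have hiso : ∀ x y, u₁ x ≤ u₁ y ↔ u₂ x ≤ u₂ y := by
    intro x y
    simp only [hu₁, hu₂]
    rw [hmul_le, hmul_le]
    exact hord x y
  have hb₁ : ∀ x, N ≤ u₁ x := by
    intro x
    simp only [hu₁]
    calc N = N * 1 := by ring
    _ ≤ N * (n₁ x + 1) := Nat.mul_le_mul le_rfl (by omega)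
  have hb₂ : ∀ x, N ≤ u₂ x := by
    intro x
    simp only [hu₂]
    calc N = N * 1 := by ring
    _ ≤ N * (n₂ x + 1) := Nat.mul_le_mul le_rfl (by omega)
  have hgap : ∀ a b : ℕ, N * (a + 1) < N * (b + 1) → N * (a + 1) + N ≤ N * (b + 1) := by
    intro a b h
    have hab : a < b := by
      by_contra hcon
      push_neg at hcon
      have := Nat.mul_le_mul (le_refl N) (show b + 1 ≤ a + 1 by omega)
      omega
    calc N * (a + 1) + N = N * (a + 2) := by ring
    _ ≤ N * (b + 1) := Nat.mul_le_mul le_rfl (by omega)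
  have hg₁ : ∀ x y, u₁ x < u₁ y → u₁ x + N ≤ u₁ y := fun x y => hgap (n₁ x) (n₁ y)
  have hg₂ : ∀ x y, u₂ x < u₂ y → u₂ x + N ≤ u₂ y := fun x y => hgap (n₂ x) (n₂ y)
  have hatom : ∀ (a : Option AP) (x j j' : ℕ), Rrel u₁ u₂ 0 j j' →
      (a ∈ encTrace w₁ (fun i => N * (i + 1)) (n₁ x) j ↔
        a ∈ encTrace w₂ (fun i => N * (i + 1)) (n₂ x) j') := by
    intro a x j j' hR
    match a with
    | none =>
        rw [mem_encTrace_none, mem_encTrace_none]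
        have h0 := (hR.2 x).2 0 le_rfl
        simp only [Nat.add_zero] at h0
        constructor
        · intro h
          exact (h0.mp h.symm).symm
        · intro h
          exact (h0.mpr h.symm).symm
    | some a =>
        rw [mem_encTrace_some, mem_encTrace_some, hlet x]
        exact and_congr hR.1 Iff.rfl
  have hR00 : Rrel u₁ u₂ ψ.depth 0 0 := by
    refine ⟨Iff.rfl, fun x => ⟨by omega, fun c hc => ?_⟩⟩
    have h1 := hb₁ x
    have h2 := hb₂ x
    constructor
    · intro h; exfalso; omega
    · intro h; exfalso; omega
  have := transfer N u₁ u₂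
    (fun x => encTrace w₁ (fun i => N * (i + 1)) (n₁ x))
    (fun x => encTrace w₂ (fun i => N * (i + 1)) (n₂ x))
    hiso hb₁ hb₂ hg₁ hg₂ hatom ψ ψ.depth le_rfl hN 0 0 hR00
  rwa [shiftAsg_zero, shiftAsg_zero] at this

end QFFlatten

namespace QFFlatten

attribute [local instance] Classical.propDecidable

/-! ### Simple formulas: boolean connectives, literals, semantics -/

def qtop (AP : Type) : QF (Option AP) := .disj (.atom none 0) (.neg (.atom none 0))

def qbot (AP : Type) : QF (Option AP) := .neg (qtop AP)

def bigAnd {AP : Type} (l : List (QF (Option AP))) : QF (Option AP) :=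
  l.foldr QF.conj (qtop AP)

def bigOr {AP : Type} (l : List (QF (Option AP))) : QF (Option AP) :=
  l.foldr QF.disj (qbot AP)

def litA {AP : Type} (x : ℕ) (a : AP) (b : Bool) : QF (Option AP) :=
  if b then .atom (some a) x else .neg (.atom (some a) x)

def litO {AP : Type} (x y : ℕ) (b : Bool) : QF (Option AP) :=
  if b then leHat x y else .neg (leHat x y)

lemma sat_qtop {AP : Type} (As : ℕ → Trace (Option AP)) : (qtop AP).sat As := by
  by_cases h : (none : Option AP) ∈ As 0 0
  · exact Or.inl h
  · exact Or.inr h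

lemma sat_qbot {AP : Type} (As : ℕ → Trace (Option AP)) : ¬ (qbot AP).sat As :=
  fun h => h (sat_qtop As)

lemma sat_conj {AP : Type} (a b : QF AP) (As : ℕ → Trace AP) :
    (QF.conj a b).sat As ↔ a.sat As ∧ b.sat As := by
  simp [QF.conj, QF.sat, not_or, not_not]

lemma sat_bigAnd {AP : Type} (l : List (QF (Option AP))) (As : ℕ → Trace (Option AP)) :
    (bigAnd l).sat As ↔ ∀ ϕ ∈ l, ϕ.sat As := by
  induction l with
  | nil => exact iff_of_true (sat_qtop As) (by simp)
  | cons a l ih =>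
      rw [show bigAnd (a :: l) = QF.conj a (bigAnd l) from rfl, sat_conj, ih]
      simp

lemma sat_bigOr {AP : Type} (l : List (QF (Option AP))) (As : ℕ → Trace (Option AP)) :
    (bigOr l).sat As ↔ ∃ ϕ ∈ l, ϕ.sat As := by
  induction l with
  | nil => exact iff_of_false (sat_qbot As) (by simp)
  | cons a l ih =>
      rw [show bigOr (a :: l) = QF.disj a (bigOr l) from rfl]
      rw [show (QF.disj a (bigOr l)).sat As ↔ a.sat As ∨ (bigOr l).sat As from Iff.rfl, ih]
      simp

lemma ev_sat {AP : Type} (χ : QF AP) (As : ℕ → Trace AP) :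
    (QF.ev χ).sat As ↔ ∃ j, χ.sat (shiftAsg As j) := by
  constructor
  · rintro ⟨j, hj, -⟩
    exact ⟨j, hj⟩
  · rintro ⟨j, hj⟩
    refine ⟨j, hj, fun j' _ => ?_⟩
    by_cases h : χ.sat (shiftAsg As j')
    · exact Or.inl h
    · exact Or.inr h

/-! ### Simplicity -/

lemma simple_qtop {AP : Type} : SimpleQF (qtop AP) :=
  .disj (.atom none 0) (.neg (.atom none 0))

lemma simple_qbot {AP : Type} : SimpleQF (qbot AP) := .neg simple_qtop

lemma simple_conj {AP : Type} {a b : QF (Option AP)} (ha : SimpleQF a)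
    (hb : SimpleQF b) : SimpleQF (QF.conj a b) := .neg (.disj (.neg ha) (.neg hb))

lemma simple_bigAnd {AP : Type} {l : List (QF (Option AP))}
    (h : ∀ ϕ ∈ l, SimpleQF ϕ) : SimpleQF (bigAnd l) := by
  induction l with
  | nil => exact simple_qtop
  | cons a l ih =>
      exact simple_conj (h a (by simp)) (ih fun ϕ hϕ => h ϕ (by simp [hϕ]))

lemma simple_bigOr {AP : Type} {l : List (QF (Option AP))}
    (h : ∀ ϕ ∈ l, SimpleQF ϕ) : SimpleQF (bigOr l) := by
  induction l with
  | nil => exact simple_qbot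
  | cons a l ih =>
      exact .disj (h a (by simp)) (ih fun ϕ hϕ => h ϕ (by simp [hϕ]))

lemma simple_litA {AP : Type} (x : ℕ) (a : AP) (b : Bool) : SimpleQF (litA x a b) := by
  cases b
  · exact .neg (.atom (some a) x)
  · exact .atom (some a) x

lemma simple_litO {AP : Type} (x y : ℕ) (b : Bool) : SimpleQF (litO (AP := AP) x y b) := by
  cases b
  · exact .neg (.le x y)
  · exact .le x y

/-! ### Free variables -/

lemma fv_qtop {AP : Type} : (qtop AP).freeVars = {0} := by
  simp [qtop, QF.freeVars]

lemma fv_qbot {AP : Type} : (qbot AP).freeVars = {0} := by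
  simp [qbot, QF.freeVars, fv_qtop]

lemma fv_conj {AP : Type} (a b : QF AP) :
    (QF.conj a b).freeVars = a.freeVars ∪ b.freeVars := by
  simp [QF.conj, QF.freeVars]

lemma fv_ev {AP : Type} (χ : QF AP) : (QF.ev χ).freeVars = χ.freeVars := by
  simp [QF.ev, QF.freeVars]

lemma fv_leHat {AP : Type} (x y : ℕ) :
    (leHat (AP := AP) x y).freeVars = {x} ∪ {y} := by
  simp [leHat, fv_ev, fv_conj, QF.freeVars]

lemma fv_litA {AP : Type} (x : ℕ) (a : AP) (b : Bool) :
    (litA x a b).freeVars = {x} := by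
  cases b <;> simp [litA, QF.freeVars]

lemma fv_litO {AP : Type} (x y : ℕ) (b : Bool) :
    (litO (AP := AP) x y b).freeVars = {x} ∪ {y} := by
  cases b <;> simp [litO, QF.freeVars, fv_leHat]

lemma fv_bigAnd_subset {AP : Type} {l : List (QF (Option AP))} {T : Set ℕ}
    (h0 : (0 : ℕ) ∈ T) (h : ∀ ϕ ∈ l, ϕ.freeVars ⊆ T) : (bigAnd l).freeVars ⊆ T := by
  induction l with
  | nil =>
      rw [show bigAnd ([] : List (QF (Option AP))) = qtop AP from rfl, fv_qtop]
      simpa using h0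
  | cons a l ih =>
      rw [show bigAnd (a :: l) = QF.conj a (bigAnd l) from rfl, fv_conj]
      exact Set.union_subset (h a (by simp)) (ih fun ϕ hϕ => h ϕ (by simp [hϕ]))

lemma fv_bigOr_subset {AP : Type} {l : List (QF (Option AP))} {T : Set ℕ}
    (h0 : (0 : ℕ) ∈ T) (h : ∀ ϕ ∈ l, ϕ.freeVars ⊆ T) : (bigOr l).freeVars ⊆ T := by
  induction l with
  | nil =>
      rw [show bigOr ([] : List (QF (Option AP))) = qbot AP from rfl, fv_qbot]
      simpa using h0
  | cons a l ih =>
      rw [show bigOr (a :: l) = QF.disj a (bigOr l) from rfl]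
      rw [show (QF.disj a (bigOr l)).freeVars = a.freeVars ∪ (bigOr l).freeVars from rfl]
      exact Set.union_subset (h a (by simp)) (ih fun ϕ hϕ => h ϕ (by simp [hϕ]))

/-! ### Semantics of the literals over encoded assignments -/

lemma sat_atomA {AP : Type} (w : FinWord AP) (f : ℕ → ℕ) (n : ℕ → ℕ) (x : ℕ) (a : AP) :
    (QF.atom (some a) x).sat (fun z => encTrace w f (n z)) ↔ a ∈ w.letter (n x) := by
  rw [show (QF.atom (some a) x).sat (fun z => encTrace w f (n z)) ↔
    some a ∈ encTrace w f (n x) 0 from Iff.rfl, mem_encTrace_some]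
  simp

lemma sat_leHat {AP : Type} (w : FinWord AP) (f : ℕ → ℕ) (hf : IsStretch f)
    (n : ℕ → ℕ) (x y : ℕ) :
    (leHat x y).sat (fun z => encTrace w f (n z)) ↔ n x ≤ n y := by
  rw [show leHat x y = QF.ev (QF.conj (.atom none x) (QF.ev (.atom none y))) from rfl,
    ev_sat]
  simp only [sat_conj, ev_sat]
  constructor
  · rintro ⟨j, h1, j₂, h2⟩
    simp only [QF.sat, shiftAsg, Trace.shift, mem_encTrace_none] at h1 h2
    exact hf.1.le_iff_le.mp (by omega)
  · intro hxy
    have hle : f (n x) ≤ f (n y) := hf.1.le_iff_le.mpr hxy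
    refine ⟨f (n x), ?_, f (n y) - f (n x), ?_⟩ <;>
      simp only [QF.sat, shiftAsg, Trace.shift, mem_encTrace_none] <;> omega

lemma sat_litA {AP : Type} (w : FinWord AP) (f : ℕ → ℕ) (n : ℕ → ℕ) (x : ℕ) (a : AP)
    (b : Bool) :
    (litA x a b).sat (fun z => encTrace w f (n z)) ↔
      ((if a ∈ w.letter (n x) then true else false) = b) := by
  cases b
  · rw [show litA x a false = QF.neg (.atom (some a) x) from by simp [litA]]
    rw [show (QF.neg (QF.atom (some a) x)).sat (fun z => encTrace w f (n z)) ↔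
      ¬ (QF.atom (some a) x).sat (fun z => encTrace w f (n z)) from Iff.rfl]
    rw [sat_atomA]
    by_cases h : a ∈ w.letter (n x) <;> simp [h]
  · rw [show litA x a true = QF.atom (some a) x from by simp [litA]]
    rw [sat_atomA]
    by_cases h : a ∈ w.letter (n x) <;> simp [h]

lemma sat_litO {AP : Type} (w : FinWord AP) (f : ℕ → ℕ) (hf : IsStretch f)
    (n : ℕ → ℕ) (x y : ℕ) (b : Bool) :
    (litO x y b).sat (fun z => encTrace w f (n z)) ↔
      ((if n x ≤ n y then true else false) = b) := by
  cases b
  · rw [show litO (AP := AP) x y false = QF.neg (leHat x y) from by simp [litO]]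
    rw [show (QF.neg (leHat x y)).sat (fun z => encTrace w f (n z)) ↔
      ¬ (leHat x y).sat (fun z => encTrace w f (n z)) from Iff.rfl]
    rw [sat_leHat w f hf]
    by_cases h : n x ≤ n y <;> simp [h]
  · rw [show litO (AP := AP) x y true = leHat x y from by simp [litO]]
    rw [sat_leHat w f hf]
    by_cases h : n x ≤ n y <;> simp [h]

end QFFlatten

namespace QFFlatten

attribute [local instance] Classical.propDecidable

/-! ### Profiles -/

noncomputable def profList {AP : Type} [Fintype AP] {k : ℕ}
    (τ : (Fin k → AP → Bool) × (Fin k → Fin k → Bool)) : List (QF (Option AP)) :=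
  ((Finset.univ : Finset (Fin k × AP)).toList.map fun p => litA p.1 p.2 (τ.1 p.1 p.2)) ++
  ((Finset.univ : Finset (Fin k × Fin k)).toList.map fun p => litO p.1 p.2 (τ.2 p.1 p.2))

noncomputable def profForm {AP : Type} [Fintype AP] {k : ℕ}
    (τ : (Fin k → AP → Bool) × (Fin k → Fin k → Bool)) : QF (Option AP) :=
  bigAnd (profList τ)

noncomputable def prof {AP : Type} (w : FinWord AP) (n : ℕ → ℕ) (k : ℕ) :
    (Fin k → AP → Bool) × (Fin k → Fin k → Bool) :=
  (fun x a => if a ∈ w.letter (n x) then true else false,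
   fun x y => if n x ≤ n y then true else false)

lemma simple_profForm {AP : Type} [Fintype AP] {k : ℕ}
    (τ : (Fin k → AP → Bool) × (Fin k → Fin k → Bool)) : SimpleQF (profForm τ) := by
  apply simple_bigAnd
  intro ϕ hϕ
  rcases List.mem_append.mp hϕ with h | h <;> obtain ⟨p, -, rfl⟩ := List.mem_map.mp h
  · exact simple_litA _ _ _
  · exact simple_litO _ _ _

lemma fv_profForm_subset {AP : Type} [Fintype AP] {k : ℕ} (hk : 0 < k)
    (τ : (Fin k → AP → Bool) × (Fin k → Fin k → Bool)) :
    (profForm τ).freeVars ⊆ {x | x < k} := by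
  apply fv_bigAnd_subset (by simpa using hk)
  intro ϕ hϕ
  rcases List.mem_append.mp hϕ with h | h <;> obtain ⟨p, -, rfl⟩ := List.mem_map.mp h
  · rw [fv_litA]
    intro z hz
    simp only [Set.mem_singleton_iff] at hz
    simp only [Set.mem_setOf_eq, hz]
    exact p.1.isLt
  · rw [fv_litO]
    intro z hz
    rcases hz with hz | hz <;> simp only [Set.mem_singleton_iff] at hz <;>
      simp only [Set.mem_setOf_eq, hz] <;> exact Fin.is_lt _

lemma sat_profForm {AP : Type} [Fintype AP] {k : ℕ} (hk : 0 < k) (w : FinWord AP)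
    (f : ℕ → ℕ) (hf : IsStretch f) (n : ℕ → ℕ)
    (τ : (Fin k → AP → Bool) × (Fin k → Fin k → Bool)) :
    (profForm τ).sat (fun z => encTrace w f (n z)) ↔ τ = prof w n k := by
  rw [profForm, sat_bigAnd]
  constructor
  · intro h
    have hA : ∀ (x : Fin k) (a : AP),
        (if a ∈ w.letter (n x) then true else false) = τ.1 x a := by
      intro x a
      have hm : litA (x : ℕ) a (τ.1 x a) ∈ profList τ := by
        apply List.mem_append_left
        exact List.mem_map_of_mem (f := fun p : Fin k × AP => litA (p.1 : ℕ) p.2 (τ.1 p.1 p.2))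
          (Finset.mem_toList.mpr (Finset.mem_univ (x, a)))
      have hs := h _ hm
      rwa [sat_litA] at hs
    have hO : ∀ (x y : Fin k),
        (if n x ≤ n y then true else false) = τ.2 x y := by
      intro x y
      have hm : litO (x : ℕ) (y : ℕ) (τ.2 x y) ∈ profList τ := by
        apply List.mem_append_right
        exact List.mem_map_of_mem (f := fun p : Fin k × Fin k => litO (p.1 : ℕ) (p.2 : ℕ) (τ.2 p.1 p.2))
          (Finset.mem_toList.mpr (Finset.mem_univ (x, y)))
      have hs := h _ hm
      rwa [sat_litO w f hf] at hs
    rw [Prod.ext_iff]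
    constructor
    · funext x a
      exact (hA x a).symm
    · funext x y
      exact (hO x y).symm
  · rintro rfl
    intro ϕ hϕ
    rcases List.mem_append.mp hϕ with h | h <;> obtain ⟨p, -, rfl⟩ := List.mem_map.mp h
    · rw [sat_litA]
      rfl
    · rw [sat_litO w f hf]
      rfl

end QFFlatten

open QFFlatten

/-- **Flattening quantifier-free formulas over word encodings**: for every
quantifier-free `ψ` with free variables among `π₁, …, π_k` and `N = depth(ψ)+1`,
there is a Boolean combination `ψ~` of formulas `a_π` and `F(o_π ∧ F o_π')` such
that for all `T = enc(w, f)` and assignments `Π` into `T`: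
`(T^(N), Π^(N)) ⊨ ψ` iff `(T, Π) ⊨ ψ~`. -/
theorem qf_simplification (AP : Type) [Fintype AP] (ψ : QF (Option AP)) (k : ℕ)
    (hfree : ψ.freeVars ⊆ {x | x < k}) :
    ∃ ψt : QF (Option AP), SimpleQF ψt ∧ ψt.freeVars ⊆ {x | x < k} ∧
      ∀ (w : FinWord AP) (f : ℕ → ℕ), IsStretch f →
        ∀ As As' : ℕ → Trace (Option AP),
          (∀ x, ∃ n, n < w.len ∧ As x = encTrace w f n ∧
            As' x = encTrace w (fun i => (ψ.depth + 1) * (i + 1)) n) →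
          (ψ.sat As' ↔ ψt.sat As) := by
  classical
  obtain ⟨x₀, hx₀⟩ := freeVars_nonempty ψ
  have hk : 0 < k := by
    have h := hfree hx₀
    simp only [Set.mem_setOf_eq] at h
    omega
  set N := ψ.depth + 1 with hNdef
  set S : Finset ((Fin k → AP → Bool) × (Fin k → Fin k → Bool)) :=
    Finset.univ.filter (fun τ =>
      ∃ (w : FinWord AP) (n : ℕ → ℕ), prof w n k = τ ∧
        ψ.sat (fun x => encTrace w (fun i => N * (i + 1)) (n x))) with hSdef
  refine ⟨bigOr (S.toList.map profForm), ?_, ?_, ?_⟩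
  · apply simple_bigOr
    intro ϕ hϕ
    obtain ⟨τ, -, rfl⟩ := List.mem_map.mp hϕ
    exact simple_profForm τ
  · apply fv_bigOr_subset (by simpa using hk)
    intro ϕ hϕ
    obtain ⟨τ, -, rfl⟩ := List.mem_map.mp hϕ
    exact fv_profForm_subset hk τ
  · intro w f hf As As' hAS
    choose n hlen hAs hAs' using hAS
    rw [funext hAs, funext hAs', sat_bigOr]
    have hRHS : (∃ ϕ ∈ S.toList.map profForm, ϕ.sat (fun z => encTrace w f (n z))) ↔
        prof w n k ∈ S := by
      constructor
      · rintro ⟨ϕ, hϕ, hsat⟩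
        obtain ⟨τ, hτS, rfl⟩ := List.mem_map.mp hϕ
        have hτ := (sat_profForm hk w f hf n τ).mp hsat
        rw [← hτ]
        exact Finset.mem_toList.mp hτS
      · intro hmem
        exact ⟨profForm (prof w n k),
          List.mem_map.mpr ⟨_, Finset.mem_toList.mpr hmem, rfl⟩,
          (sat_profForm hk w f hf n _).mpr rfl⟩
    rw [hRHS]
    simp only [hSdef, Finset.mem_filter, Finset.mem_univ, true_and]
    constructor
    · intro h
      exact ⟨w, n, rfl, h⟩
    · rintro ⟨w', n', hτ, hsat⟩
      set msk : ℕ → ℕ := fun z => if z < k then z else 0 with hmskdef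
      have hmsk : ∀ z, msk z < k := by
        intro z
        rw [hmskdef]
        by_cases h : z < k <;> simp [h, hk]
      have hcongr1 : ψ.sat (fun z => encTrace w (fun i => N * (i + 1)) (n z)) ↔
          ψ.sat (fun z => encTrace w (fun i => N * (i + 1)) (n (msk z))) := by
        apply sat_congr
        intro z hz
        have hzk : z < k := by
          have := hfree hz
          simpa using this
        have hmz : msk z = z := by rw [hmskdef]; simp [hzk]
        rw [hmz]
      have hcongr2 : ψ.sat (fun z => encTrace w' (fun i => N * (i + 1)) (n' z)) ↔
          ψ.sat (fun z => encTrace w' (fun i => N * (i + 1)) (n' (msk z))) := by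
        apply sat_congr
        intro z hz
        have hzk : z < k := by
          have := hfree hz
          simpa using this
        have hmz : msk z = z := by rw [hmskdef]; simp [hzk]
        rw [hmz]
      have hletter : ∀ z, w'.letter (n' (msk z)) = w.letter (n (msk z)) := by
        intro z
        apply Set.ext
        intro a
        have h1 := congrFun (congrFun (congrArg Prod.fst hτ) ⟨msk z, hmsk z⟩) a
        simp only [prof] at h1
        by_cases h2 : a ∈ w'.letter (n' (msk z)) <;>
          by_cases h3 : a ∈ w.letter (n (msk z)) <;>
          simp [h2, h3] at h1 ⊢
      have horder : ∀ z t, n' (msk z) ≤ n' (msk t) ↔ n (msk z) ≤ n (msk t) := by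
        intro z t
        have h1 := congrFun (congrFun (congrArg Prod.snd hτ) ⟨msk z, hmsk z⟩) ⟨msk t, hmsk t⟩
        simp only [prof] at h1
        by_cases h2 : n' (msk z) ≤ n' (msk t) <;>
          by_cases h3 : n (msk z) ≤ n (msk t) <;>
          simp [h2, h3] at h1 ⊢
      have hcore := core w' w (fun z => n' (msk z)) (fun z => n (msk z)) N
        hletter horder ψ (by omega)
      rw [hcongr1, ← hcore, ← hcongr2]
      exact hsat
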